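/- Charge computation: for the profile φ^α_{k,ω} on the star graph, Q(Φ^α_{k,ω}) = −ω‖φ^α_{k,ω}‖²_{L²(Γ)} equals Q₁(ω)Q₂(ω), where Q₁(ω) = −2ω·((p+1)/2)^{2/(p−1)}·(m²−ω²)^{(5−p)/(2(p−1))}/(p−1) and Q₂(ω) = k∫_{−t₀}^1 (1−t²)^{(3−p)/(p−1)}dt + (N−k)∫_{t₀}^1 (1−t²)^{(3−p)/(p−1)}dt with t₀ = α/((2k−N)√(m²−ω²)). -/

import Mathlib

open Real MeasureTheory Set intervalIntegral

set_option maxHeartbeats 1000000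

/-- Inverse hyperbolic tangent. -/


noncomputable def artanh (t : ℝ) : ℝ := Real.log ((1 + t) / (1 - t)) / 2

lemma cosh_sq_inv (u : ℝ) : (1 / Real.cosh u) ^ 2 = 1 - Real.tanh u ^ 2 := by
  have h := Real.cosh_pos u
  rw [Real.tanh_eq_sinh_div_cosh]
  field_simp
  linarith [Real.cosh_sq_sub_sinh_sq u]

lemma tanh_sq_lt_one (u : ℝ) : Real.tanh u ^ 2 < 1 := by
  have h1 : (0:ℝ) < (1 / Real.cosh u) ^ 2 := by positivity
  nlinarith [cosh_sq_inv u]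

lemma tanh_lt_one' (u : ℝ) : Real.tanh u < 1 := by nlinarith [_root_.tanh_sq_lt_one u]

lemma neg_one_lt_tanh (u : ℝ) : -1 < Real.tanh u := by nlinarith [_root_.tanh_sq_lt_one u]

lemma hasDerivAt_tanh (u : ℝ) : HasDerivAt Real.tanh (1 - Real.tanh u ^ 2) u := by
  have h : HasDerivAt (fun x => Real.sinh x / Real.cosh x)
      ((Real.cosh u * Real.cosh u - Real.sinh u * Real.sinh u) / Real.cosh u ^ 2) u :=
    (Real.hasDerivAt_sinh u).div (Real.hasDerivAt_cosh u) (Real.cosh_pos u).ne'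
  have he : Real.tanh = fun x => Real.sinh x / Real.cosh x :=
    funext fun x => Real.tanh_eq_sinh_div_cosh x
  rw [he]
  convert h using 1
  have hc := (Real.cosh_pos u).ne'
  field_simp

lemma tanh_strictMono : StrictMono Real.tanh :=
  strictMono_of_hasDerivAt_pos hasDerivAt_tanh fun u => by nlinarith [_root_.tanh_sq_lt_one u]

lemma tanh_artanh {t : ℝ} (h1 : -1 < t) (h2 : t < 1) : Real.tanh (_root_.artanh t) = t := by
  have h1' : (0:ℝ) < 1 + t := by linarith
  have h2' : (0:ℝ) < 1 - t := by linarith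
  have hu : 0 < (1 + t) / (1 - t) := div_pos h1' h2'
  have hE : Real.exp (_root_.artanh t) ^ 2 = (1 + t) / (1 - t) := by
    rw [← Real.exp_nat_mul, _root_.artanh,
      show (2:ℕ) * (Real.log ((1+t)/(1-t)) / 2) = Real.log ((1+t)/(1-t)) by push_cast; ring]
    exact Real.exp_log hu
  have hEpos := Real.exp_pos (_root_.artanh t)
  have hEne := hEpos.ne'
  rw [pow_two] at hE
  have key : Real.exp (_root_.artanh t) * Real.exp (_root_.artanh t) * (1 - t) = 1 + t := by
    rw [hE]; field_simp
  have hden : (0:ℝ) < Real.exp (_root_.artanh t) + (Real.exp (_root_.artanh t))⁻¹ := by positivity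
  rw [Real.tanh_eq_sinh_div_cosh, Real.sinh_eq, Real.cosh_eq, Real.exp_neg]
  rw [div_eq_iff (by positivity)]
  field_simp
  nlinarith [key]


lemma integral_Ioo_tanh (b c₀ γ : ℝ) (hb : 0 < b) :
    ∫ t in Set.Ioo (Real.tanh c₀) 1, (1 - t ^ 2) ^ γ
      = ∫ x in Set.Ioi (0:ℝ), b * (1 - Real.tanh (b * x + c₀) ^ 2) ^ (γ + 1) := by
  have haff : StrictMono (fun x : ℝ => b * x + c₀) := fun x y h => by
    simp only; nlinarith
  have hsm : StrictMono (fun x : ℝ => Real.tanh (b * x + c₀)) :=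
    fun x y h => tanh_strictMono (haff h)
  have hderiv : ∀ x ∈ Set.Ioi (0:ℝ), HasDerivWithinAt (fun x => Real.tanh (b * x + c₀))
      (b * (1 - Real.tanh (b * x + c₀) ^ 2)) (Set.Ioi 0) x := by
    intro x _
    have h1 : HasDerivAt (fun x : ℝ => b * x + c₀) b x := by
      simpa using ((hasDerivAt_id x).const_mul b).add_const c₀
    have := (hasDerivAt_tanh (b * x + c₀)).comp x h1
    have h2 : (1 - Real.tanh (b * x + c₀) ^ 2) * b = b * (1 - Real.tanh (b * x + c₀) ^ 2) := by
      ring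
    rw [h2] at this
    exact this.hasDerivWithinAt
  have himg : (fun x => Real.tanh (b * x + c₀)) '' Set.Ioi 0
      = Set.Ioo (Real.tanh c₀) 1 := by
    ext y
    constructor
    · rintro ⟨x, hx, rfl⟩
      exact ⟨tanh_strictMono (by simp only [Set.mem_Ioi] at hx; nlinarith), tanh_lt_one' _⟩
    · rintro ⟨hy1, hy2⟩
      have hy0 : -1 < y := lt_trans (_root_.neg_one_lt_tanh c₀) hy1
      have hta := tanh_artanh hy0 hy2
      have hgt : c₀ < _root_.artanh y := by
        by_contra h
        push_neg at h
        have := tanh_strictMono.le_iff_le.mpr h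
        rw [hta] at this
        exact absurd hy1 (not_lt.mpr this)
      refine ⟨(_root_.artanh y - c₀) / b, by simp only [Set.mem_Ioi]; exact div_pos (by linarith) hb, ?_⟩
      simp only
      rw [show b * ((_root_.artanh y - c₀) / b) + c₀ = _root_.artanh y by field_simp; ring]
      exact hta
  rw [← himg, integral_image_eq_integral_abs_deriv_smul measurableSet_Ioi hderiv
    hsm.injective.injOn]
  refine MeasureTheory.setIntegral_congr_fun measurableSet_Ioi fun x _ => ?_
  have hpos : 0 < 1 - Real.tanh (b * x + c₀) ^ 2 := by
    nlinarith [_root_.tanh_sq_lt_one (b * x + c₀)]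
  rw [smul_eq_mul, abs_of_pos (mul_pos hb hpos), Real.rpow_add hpos, Real.rpow_one]
  ring


lemma pow_helper {A s p : ℝ} (hA : 0 < A) (hs : 0 < s) (hp : 1 < p) :
    ((A * s) ^ ((1:ℝ)/(p-1))) ^ 2 = A ^ ((2:ℝ)/(p-1)) * s ^ ((3-p)/(p-1) + 1) := by
  have hp1 : p - 1 ≠ 0 := ne_of_gt (by linarith)
  have h1 : ((3-p)/(p-1) + 1) = 2/(p-1) := by field_simp; ring_nf
  rw [h1, ← Real.rpow_natCast ((A*s) ^ ((1:ℝ)/(p-1))) 2,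
    ← Real.rpow_mul (mul_pos hA hs).le,
    show (1:ℝ)/(p-1) * ((2:ℕ):ℝ) = 2/(p-1) by push_cast; ring]
  exact Real.mul_rpow hA.le hs.le

/-- Charge computation: `Q(Φ) = -ω ‖φ‖²_{L²(Γ)} = Q₁(ω) Q₂(ω)`. -/
theorem charge_computation (N k : ℕ) (α p m ω : ℝ)
    (hN : 2 ≤ N) (hk : (k : ℝ) ≤ ((N : ℝ) - 1) / 2) (hα : α ≠ 0) (hp : 1 < p)
    (hmω : m ^ 2 - ω ^ 2 > α ^ 2 / ((N : ℝ) - 2 * k) ^ 2)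
    (c t₀ : ℝ)
    (ht₀ : t₀ = α / ((2 * (k : ℝ) - N) * Real.sqrt (m ^ 2 - ω ^ 2)))
    (hc : c = _root_.artanh t₀)
    (φ : Fin N → ℝ → ℝ)
    (hφ : ∀ j : Fin N, φ j = fun x =>
      ((p + 1) * (m ^ 2 - ω ^ 2) / 2 *
        (1 / Real.cosh ((p - 1) * Real.sqrt (m ^ 2 - ω ^ 2) / 2 * x
            + (if (j : ℕ) < k then -c else c))) ^ 2) ^ (1 / (p - 1)))
    (Q₁ Q₂ : ℝ)
    (hQ₁ : Q₁ = -2 * ω * ((p + 1) / 2) ^ (2 / (p - 1)) *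
      (m ^ 2 - ω ^ 2) ^ ((5 - p) / (2 * (p - 1))) / (p - 1))
    (hQ₂ : Q₂ = (k : ℝ) * (∫ t in (-t₀)..1, (1 - t ^ 2) ^ ((3 - p) / (p - 1))) +
      ((N : ℝ) - k) * ∫ t in t₀..1, (1 - t ^ 2) ^ ((3 - p) / (p - 1))) :
    -ω * (∑ j : Fin N, ∫ x in Ioi (0 : ℝ), φ j x ^ 2) = Q₁ * Q₂ := by
  have hN' : (2:ℝ) ≤ (N:ℝ) := by exact_mod_cast hN
  have hNk : (1:ℝ) ≤ (N:ℝ) - 2 * k := by linarith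
  have hα2 : 0 < α ^ 2 := lt_of_le_of_ne (sq_nonneg α) (Ne.symm (pow_ne_zero 2 hα))
  have hNk2 : (0:ℝ) < ((N:ℝ) - 2 * k) ^ 2 := by nlinarith
  have hD : 0 < m ^ 2 - ω ^ 2 := lt_trans (div_pos hα2 hNk2) hmω
  have hs : 0 < Real.sqrt (m ^ 2 - ω ^ 2) := Real.sqrt_pos.mpr hD
  have hsq : Real.sqrt (m ^ 2 - ω ^ 2) ^ 2 = m ^ 2 - ω ^ 2 := Real.sq_sqrt hD.le
  have hp1 : (0:ℝ) < p - 1 := by linarith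
  have hb : (0:ℝ) < (p - 1) * Real.sqrt (m ^ 2 - ω ^ 2) / 2 := by positivity
  have ht0sq : t₀ ^ 2 < 1 := by
    rw [ht₀, div_pow, mul_pow, hsq, show (2 * (k:ℝ) - N) ^ 2 = ((N:ℝ) - 2*k)^2 by ring,
      div_lt_one (mul_pos hNk2 hD)]
    nlinarith [(div_lt_iff₀ hNk2).mp hmω]
  have ht0a : -1 < t₀ := by nlinarith
  have ht0b : t₀ < 1 := by nlinarith
  have htc : Real.tanh c = t₀ := by rw [hc]; exact tanh_artanh ht0a ht0b
  have htnc : Real.tanh (-c) = -t₀ := by rw [Real.tanh_neg, htc]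
  have hA : 0 < (p + 1) * (m ^ 2 - ω ^ 2) / 2 := by
    have : (0:ℝ) < p + 1 := by linarith
    positivity
  -- generic edge computation
  have hedge₀ : ∀ c₀ : ℝ,
      (∫ x in Ioi (0:ℝ),
        (((p + 1) * (m ^ 2 - ω ^ 2) / 2 *
          (1 / Real.cosh ((p - 1) * Real.sqrt (m ^ 2 - ω ^ 2) / 2 * x + c₀)) ^ 2) ^
            (1 / (p - 1))) ^ 2)
      = ((p + 1) * (m ^ 2 - ω ^ 2) / 2) ^ ((2:ℝ)/(p-1)) *
          ((p - 1) * Real.sqrt (m ^ 2 - ω ^ 2) / 2)⁻¹ *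
          ∫ t in (Real.tanh c₀)..1, (1 - t ^ 2) ^ ((3 - p) / (p - 1)) := by
    intro c₀
    have hpt : ∀ x : ℝ,
        (((p + 1) * (m ^ 2 - ω ^ 2) / 2 *
          (1 / Real.cosh ((p - 1) * Real.sqrt (m ^ 2 - ω ^ 2) / 2 * x + c₀)) ^ 2) ^
            (1 / (p - 1))) ^ 2
        = ((p + 1) * (m ^ 2 - ω ^ 2) / 2) ^ ((2:ℝ)/(p-1)) *
          (1 - Real.tanh ((p - 1) * Real.sqrt (m ^ 2 - ω ^ 2) / 2 * x + c₀) ^ 2) ^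
            ((3 - p) / (p - 1) + 1) := by
      intro x
      have hX := _root_.tanh_sq_lt_one ((p - 1) * Real.sqrt (m ^ 2 - ω ^ 2) / 2 * x + c₀)
      rw [cosh_sq_inv]
      exact pow_helper (A := (p + 1) * (m ^ 2 - ω ^ 2) / 2)
        (s := 1 - Real.tanh ((p - 1) * Real.sqrt (m ^ 2 - ω ^ 2) / 2 * x + c₀) ^ 2)
        (p := p) hA (by nlinarith) hp
    simp only [hpt]
    rw [MeasureTheory.integral_const_mul]
    have h2 := integral_Ioo_tanh ((p - 1) * Real.sqrt (m ^ 2 - ω ^ 2) / 2) c₀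
      ((3 - p) / (p - 1)) hb
    rw [MeasureTheory.integral_const_mul] at h2
    have h4 : ∫ t in Set.Ioo (Real.tanh c₀) 1, (1 - t ^ 2) ^ ((3 - p) / (p - 1))
        = ∫ t in (Real.tanh c₀)..1, (1 - t ^ 2) ^ ((3 - p) / (p - 1)) := by
      rw [intervalIntegral.integral_of_le (tanh_lt_one' c₀).le,
        MeasureTheory.integral_Ioc_eq_integral_Ioo]
    rw [← h4, h2]
    field_simp
  have hedge : ∀ j : Fin N, (∫ x in Ioi (0:ℝ), φ j x ^ 2)
      = if (j : ℕ) < k then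
          ((p + 1) * (m ^ 2 - ω ^ 2) / 2) ^ ((2:ℝ)/(p-1)) *
            ((p - 1) * Real.sqrt (m ^ 2 - ω ^ 2) / 2)⁻¹ *
            ∫ t in (-t₀)..1, (1 - t ^ 2) ^ ((3 - p) / (p - 1))
        else
          ((p + 1) * (m ^ 2 - ω ^ 2) / 2) ^ ((2:ℝ)/(p-1)) *
            ((p - 1) * Real.sqrt (m ^ 2 - ω ^ 2) / 2)⁻¹ *
            ∫ t in t₀..1, (1 - t ^ 2) ^ ((3 - p) / (p - 1)) := by
    intro j
    simp only [hφ j]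
    rw [hedge₀ (if (j : ℕ) < k then -c else c)]
    by_cases hj : (j : ℕ) < k
    · simp only [hj, if_true, htnc]
    · simp only [hj, if_false, htc]
  have hkN : k < N := by
    by_contra h
    push_neg at h
    have : (N:ℝ) ≤ (k:ℝ) := by exact_mod_cast h
    linarith
  have hcard1 : (Finset.univ.filter fun j : Fin N => (j:ℕ) < k).card = k := by
    have he : (Finset.univ.filter fun j : Fin N => (j:ℕ) < k)
        = Finset.Iio (⟨k, hkN⟩ : Fin N) := by
      ext j; simp [Fin.lt_def]
    rw [he, Fin.card_Iio]
  have hcard2 : (Finset.univ.filter fun j : Fin N => ¬ (j:ℕ) < k).card = N - k := by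
    have h := Finset.card_filter_add_card_filter_not
      (s := (Finset.univ : Finset (Fin N))) (p := fun j : Fin N => (j:ℕ) < k)
    rw [hcard1, Finset.card_univ, Fintype.card_fin] at h
    omega
  have hsum : (∑ j : Fin N, ∫ x in Ioi (0:ℝ), φ j x ^ 2)
      = (k:ℝ) * (((p + 1) * (m ^ 2 - ω ^ 2) / 2) ^ ((2:ℝ)/(p-1)) *
            ((p - 1) * Real.sqrt (m ^ 2 - ω ^ 2) / 2)⁻¹ *
            ∫ t in (-t₀)..1, (1 - t ^ 2) ^ ((3 - p) / (p - 1)))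
        + ((N:ℝ) - k) * (((p + 1) * (m ^ 2 - ω ^ 2) / 2) ^ ((2:ℝ)/(p-1)) *
            ((p - 1) * Real.sqrt (m ^ 2 - ω ^ 2) / 2)⁻¹ *
            ∫ t in t₀..1, (1 - t ^ 2) ^ ((3 - p) / (p - 1))) := by
    rw [Finset.sum_congr rfl (fun j _ => hedge j), Finset.sum_ite, Finset.sum_const,
      Finset.sum_const, hcard1, hcard2, nsmul_eq_mul, nsmul_eq_mul,
      Nat.cast_sub hkN.le]
  have hKeq : ((p + 1) * (m ^ 2 - ω ^ 2) / 2) ^ ((2:ℝ)/(p-1)) *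
      ((p - 1) * Real.sqrt (m ^ 2 - ω ^ 2) / 2)⁻¹
      = ((p + 1) / 2) ^ (2 / (p - 1)) * (m ^ 2 - ω ^ 2) ^ ((5 - p) / (2 * (p - 1)))
        * (2 / (p - 1)) := by
    rw [show (p + 1) * (m ^ 2 - ω ^ 2) / 2 = ((p + 1) / 2) * (m ^ 2 - ω ^ 2) by ring,
      Real.mul_rpow (by linarith : (0:ℝ) ≤ (p + 1) / 2) hD.le,
      Real.sqrt_eq_rpow,
      show (2:ℝ)/(p - 1) = (5 - p) / (2 * (p - 1)) + 1/2 by field_simp; ring,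
      Real.rpow_add hD]
    have hne : (m ^ 2 - ω ^ 2) ^ ((1:ℝ)/2) ≠ 0 := (Real.rpow_pos_of_pos hD _).ne'
    field_simp
    ring
  rw [hsum, hKeq, hQ₁, hQ₂]
  ring
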